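/- Let f : ℝⁿ → ℝ be continuous, 1-periodic in each variable, with zero mean value and |f| ≤ M. Let J = [β₁,γ₁] × … × [β_n,γ_n] ⊆ [0,1)ⁿ. Then for every positive integer t, |∫_J ∑_{k=1}^t f(kx) dx| ≤ M·n·(1 + log t). -/

import Mathlib

open MeasureTheory Finset Set Pointwise

variable {n : ℕ}

def boxIoc (a b : Fin n → ℝ) : Set (Fin n → ℝ) := Set.univ.pi fun i => Set.Ioc (a i) (b i)

lemma boxIoc_subset_Icc (a b : Fin n → ℝ) : boxIoc a b ⊆ Set.Icc a b := fun x hx =>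
  ⟨fun i => (hx i (Set.mem_univ i)).1.le, fun i => (hx i (Set.mem_univ i)).2⟩

lemma measurableSet_boxIoc (a b : Fin n → ℝ) : MeasurableSet (boxIoc a b) :=
  MeasurableSet.univ_pi fun i => measurableSet_Ioc

lemma integrableOn_boxIoc {f : (Fin n → ℝ) → ℝ} (hf : Continuous f) (a b : Fin n → ℝ) :
    IntegrableOn f (boxIoc a b) :=
  ((hf.continuousOn.integrableOn_compact (isCompact_Icc (a := a) (b := b)))).mono_set
    (boxIoc_subset_Icc a b)

lemma volume_boxIoc (a b : Fin n → ℝ) (hab : ∀ i, a i ≤ b i) :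
    (volume (boxIoc a b)).toReal = ∏ i, (b i - a i) := by
  rw [boxIoc, volume_pi_pi]
  rw [ENNReal.toReal_prod]
  congr 1; ext i
  rw [Real.volume_Ioc, ENNReal.toReal_ofReal (by linarith [hab i])]

lemma boxInt_translate {f : (Fin n → ℝ) → ℝ} (hf : Continuous f)
    (hper : ∀ (x : Fin n → ℝ) (v : Fin n → ℤ), f (x + fun i => (v i : ℝ)) = f x)
    (v : Fin n → ℤ) (a b : Fin n → ℝ) :
    ∫ x in boxIoc (fun i => a i + v i) (fun i => b i + v i), f x = ∫ x in boxIoc a b, f x := by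
  set w : Fin n → ℝ := fun i => (v i : ℝ) with hw
  have hmp : MeasurePreserving (fun x : Fin n → ℝ => x + w) volume volume :=
    measurePreserving_add_right volume w
  have hemb : MeasurableEmbedding (fun x : Fin n → ℝ => x + w) :=
    (MeasurableEquiv.addRight w).measurableEmbedding
  have himg : (fun x : Fin n → ℝ => x + w) '' boxIoc a b
      = boxIoc (fun i => a i + v i) (fun i => b i + v i) := by
    ext x
    simp only [boxIoc, Set.mem_image, Set.mem_pi, Set.mem_univ, Set.mem_Ioc, forall_true_left]
    constructor
    · rintro ⟨y, hy, rfl⟩ i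
      have := hy i
      simp only [Pi.add_apply, hw]
      constructor <;> linarith [this.1, this.2]
    · intro hx
      refine ⟨x - w, fun i => ?_, by simp⟩
      have := hx i
      simp only [Pi.sub_apply, hw]
      constructor <;> linarith [this.1, this.2]
  calc ∫ x in boxIoc (fun i => a i + v i) (fun i => b i + v i), f x
      = ∫ x in boxIoc a b, f (x + w) := by rw [← himg]; exact hmp.setIntegral_image_emb hemb f _
    _ = ∫ x in boxIoc a b, f x := by
        apply setIntegral_congr_fun (measurableSet_boxIoc a b)
        intro x _
        exact hper x v

lemma boxInt_split {f : (Fin n → ℝ) → ℝ} (hf : Continuous f) (a b : Fin n → ℝ) (i : Fin n)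
    {c : ℝ} (hac : a i ≤ c) (hcb : c ≤ b i) :
    ∫ x in boxIoc a b, f x =
      (∫ x in boxIoc a (Function.update b i c), f x) +
      ∫ x in boxIoc (Function.update a i c) b, f x := by
  have hset : boxIoc a b = boxIoc a (Function.update b i c) ∪ boxIoc (Function.update a i c) b := by
    ext x
    simp only [boxIoc, Set.mem_union, Set.mem_pi, Set.mem_univ, Set.mem_Ioc, forall_true_left]
    constructor
    · intro hx
      rcases le_or_gt (x i) c with h | h
      · left; intro j
        rcases eq_or_ne j i with rfl | hj
        · simpa [Function.update_self] using ⟨(hx j).1, h⟩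
        · simpa [Function.update_of_ne hj] using hx j
      · right; intro j
        rcases eq_or_ne j i with rfl | hj
        · simpa [Function.update_self] using ⟨h, (hx j).2⟩
        · simpa [Function.update_of_ne hj] using hx j
    · rintro (hx | hx) j
      · rcases eq_or_ne j i with rfl | hj
        · have := hx j; rw [Function.update_self] at this; exact ⟨this.1, this.2.trans hcb⟩
        · have := hx j; rwa [Function.update_of_ne hj] at this
      · rcases eq_or_ne j i with rfl | hj
        · have := hx j; rw [Function.update_self] at this; exact ⟨lt_of_le_of_lt hac this.1, this.2⟩
        · have := hx j; rwa [Function.update_of_ne hj] at this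
  have hdisj : Disjoint (boxIoc a (Function.update b i c)) (boxIoc (Function.update a i c) b) := by
    rw [Set.disjoint_left]
    intro x hx hx'
    have h1 := hx i (Set.mem_univ i)
    have h2 := hx' i (Set.mem_univ i)
    rw [Set.mem_Ioc, Function.update_self] at h1 h2
    exact absurd h2.1 (not_lt.2 h1.2)
  rw [hset]
  exact setIntegral_union hdisj (measurableSet_boxIoc _ _)
    (integrableOn_boxIoc hf _ _) (integrableOn_boxIoc hf _ _)

lemma boxInt_normalize {f : (Fin n → ℝ) → ℝ} (hf : Continuous f)
    (hper : ∀ (x : Fin n → ℝ) (v : Fin n → ℤ), f (x + fun i => (v i : ℝ)) = f x)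
    (a b : Fin n → ℝ) (i : Fin n) (hbi : b i = a i + 1) :
    ∫ x in boxIoc a b, f x =
      ∫ x in boxIoc (Function.update a i 0) (Function.update b i 1), f x := by
  set m : ℤ := ⌊a i⌋ with hm
  have hm1 : (m : ℝ) ≤ a i := Int.floor_le _
  have hm2 : a i < (m : ℝ) + 1 := Int.lt_floor_add_one _
  -- Step A: split at m+1
  have stepA := boxInt_split hf a b i (c := (m : ℝ) + 1) hm2.le (by rw [hbi]; linarith)
  -- Step B: translate right piece by -e_i
  have stepB : ∫ x in boxIoc (Function.update a i ((m : ℝ) + 1)) b, f x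
      = ∫ x in boxIoc (Function.update a i (m : ℝ)) (Function.update b i (a i)), f x := by
    have e1 : Function.update a i ((m : ℝ) + 1)
        = fun j => Function.update a i (m : ℝ) j + (((if j = i then 1 else 0 : ℤ)) : ℝ) := by
      funext j
      rcases eq_or_ne j i with rfl | hj
      · simp
      · simp [Function.update_of_ne hj, hj]
    have e2 : b = fun j => Function.update b i (a i) j + (((if j = i then 1 else 0 : ℤ)) : ℝ) := by
      funext j
      rcases eq_or_ne j i with rfl | hj
      · simp [hbi]
      · simp [Function.update_of_ne hj, hj]
    conv_lhs => rw [e1, e2]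
    exact boxInt_translate hf hper (fun j => if j = i then 1 else 0) _ _
  -- Step C: rejoin
  have stepC := boxInt_split hf (Function.update a i (m : ℝ)) (Function.update b i ((m : ℝ) + 1))
    i (c := a i) (by rw [Function.update_self]; exact hm1) (by rw [Function.update_self]; exact hm2.le)
  rw [Function.update_idem, Function.update_idem, Function.update_eq_self] at stepC
  -- combine: I a b = I (update a i m) (update b i (m+1))
  have key : ∫ x in boxIoc a b, f x
      = ∫ x in boxIoc (Function.update a i (m : ℝ)) (Function.update b i ((m : ℝ) + 1)), f x := by
    rw [stepA, stepB, stepC]; ring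
  rw [key]
  -- Step D: translate by -m e_i
  have e1 : Function.update a i (m : ℝ)
      = fun j => Function.update a i 0 j + (((if j = i then m else 0 : ℤ)) : ℝ) := by
    funext j
    rcases eq_or_ne j i with rfl | hj
    · simp
    · simp [Function.update_of_ne hj, hj]
  have e2 : Function.update b i ((m : ℝ) + 1)
      = fun j => Function.update b i 1 j + (((if j = i then m else 0 : ℤ)) : ℝ) := by
    funext j
    rcases eq_or_ne j i with rfl | hj
    · simp [add_comm]
    · simp [Function.update_of_ne hj, hj]
  rw [e1, e2]
  exact boxInt_translate hf hper (fun j => if j = i then m else 0) _ _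

lemma boxInt_peel {f : (Fin n → ℝ) → ℝ} (hf : Continuous f)
    (hper : ∀ (x : Fin n → ℝ) (v : Fin n → ℤ), f (x + fun i => (v i : ℝ)) = f x)
    (i : Fin n) (m : ℕ) :
    ∀ a b : Fin n → ℝ, a i + m ≤ b i →
    ∫ x in boxIoc a b, f x =
      m * (∫ x in boxIoc (Function.update a i 0) (Function.update b i 1), f x) +
      ∫ x in boxIoc (Function.update a i (a i + m)) b, f x := by
  induction m with
  | zero => intro a b _; simp [Function.update_eq_self]
  | succ m ih =>
    intro a b hab
    have hm0 : (0:ℝ) ≤ m := Nat.cast_nonneg m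
    have hcast : ((m+1 : ℕ) : ℝ) = (m : ℝ) + 1 := by push_cast; ring
    rw [hcast] at hab ⊢
    have h1 : a i ≤ a i + 1 := by linarith
    have h2 : a i + 1 ≤ b i := by linarith
    rw [boxInt_split hf a b i h1 h2]
    have hfirst := boxInt_normalize hf hper a (Function.update b i (a i + 1)) i
      (by rw [Function.update_self])
    rw [Function.update_idem] at hfirst
    have hsecond := ih (Function.update a i (a i + 1)) b
      (by rw [Function.update_self]; linarith)
    rw [Function.update_idem, Function.update_idem, Function.update_self] at hsecond
    rw [hfirst, hsecond]
    have : Function.update a i (a i + 1 + (m:ℝ)) = Function.update a i (a i + ((m:ℝ)+1)) := by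
      congr 1; ring
    rw [this]
    ring

lemma boxInt_unit {f : (Fin n → ℝ) → ℝ}
    (hmean : (∫ x in Set.Icc (0 : Fin n → ℝ) 1, f x) = 0) :
    ∫ x in boxIoc (0 : Fin n → ℝ) 1, f x = 0 := by
  have : boxIoc (0 : Fin n → ℝ) 1 =ᵐ[volume] Set.Icc (0 : Fin n → ℝ) 1 := by
    rw [boxIoc, volume_pi]
    exact MeasureTheory.Measure.univ_pi_Ioc_ae_eq_Icc
  rw [setIntegral_congr_set this, hmean]

lemma boxInt_main {f : (Fin n → ℝ) → ℝ} {M K : ℝ} (hf : Continuous f)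
    (hper : ∀ (x : Fin n → ℝ) (v : Fin n → ℤ), f (x + fun i => (v i : ℝ)) = f x)
    (hmean : (∫ x in Set.Icc (0 : Fin n → ℝ) 1, f x) = 0)
    (hbound : ∀ x, |f x| ≤ M) (hK : 0 ≤ K) :
    ∀ (c : ℕ) (s : Finset (Fin n)), sᶜ.card = c →
    ∀ a b : Fin n → ℝ, (∀ i ∈ s, a i = 0 ∧ b i = 1) → (∀ i, a i ≤ b i) →
      (∀ i ∉ s, b i - a i ≤ K) →
    |∫ x in boxIoc a b, f x| ≤ M * c * K ^ (c - 1) := by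
  have hM : 0 ≤ M := le_trans (abs_nonneg _) (hbound 0)
  intro c
  induction c with
  | zero =>
    intro s hs a b hsab _ _
    have hsu : s = Finset.univ := by
      rw [← Finset.compl_eq_empty_iff]; exact Finset.card_eq_zero.mp hs
    have ha : a = 0 := funext fun i => (hsab i (hsu ▸ Finset.mem_univ i)).1
    have hb : b = 1 := funext fun i => (hsab i (hsu ▸ Finset.mem_univ i)).2
    rw [ha, hb, boxInt_unit hmean]
    simp
  | succ c ih =>
    intro s hs a b hsab hab hlen
    obtain ⟨i, hi⟩ : ∃ i, i ∈ sᶜ := Finset.card_pos.mp (by rw [hs]; exact Nat.succ_pos c)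
    rw [Finset.mem_compl] at hi
    set d : ℝ := b i - a i with hd
    have hd0 : 0 ≤ d := by linarith [hab i]
    set m : ℕ := ⌊d⌋.toNat with hmdef
    have hmcast : (m : ℝ) = (⌊d⌋ : ℝ) := by
      exact_mod_cast congrArg (Int.cast : ℤ → ℝ) (Int.toNat_of_nonneg (Int.floor_nonneg.mpr hd0))
    have hmle : (m : ℝ) ≤ d := by rw [hmcast]; exact Int.floor_le d
    have hfr : d - m < 1 := by rw [hmcast]; linarith [Int.lt_floor_add_one d]
    have hpeel := boxInt_peel hf hper i m a b (by linarith)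
    set T := ∫ x in boxIoc (Function.update a i 0) (Function.update b i 1), f x with hT
    set R := ∫ x in boxIoc (Function.update a i (a i + m)) b, f x with hR
    -- bound on T via IH
    have hTle : |T| ≤ M * c * K ^ (c - 1) := by
      apply ih (insert i s)
      · rw [Finset.compl_insert, Finset.card_erase_of_mem (Finset.mem_compl.mpr hi), hs]
        omega
      · intro j hj
        rcases Finset.mem_insert.mp hj with rfl | hj'
        · simp
        · have hji : j ≠ i := fun h => hi (h ▸ hj')
          rw [Function.update_of_ne hji, Function.update_of_ne hji]
          exact hsab j hj'
      · intro j
        rcases eq_or_ne j i with rfl | hj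
        · simp
        · rw [Function.update_of_ne hj, Function.update_of_ne hj]; exact hab j
      · intro j hj
        have hji : j ≠ i := fun h => hj (h ▸ Finset.mem_insert_self i s)
        rw [Function.update_of_ne hji, Function.update_of_ne hji]
        exact hlen j (fun h => hj (Finset.mem_insert_of_mem h))
    -- bound on R
    have hRle : |R| ≤ M * K ^ c := by
      set a' := Function.update a i (a i + (m:ℝ)) with ha'
      have hab' : ∀ j, a' j ≤ b j := by
        intro j
        rcases eq_or_ne j i with rfl | hj
        · rw [ha', Function.update_self]; linarith
        · rw [ha', Function.update_of_ne hj]; exact hab j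
      have hvol : (volume (boxIoc a' b)).toReal ≤ K ^ c := by
        rw [volume_boxIoc a' b hab']
        calc ∏ j, (b j - a' j) ≤ ∏ j, (if j ∈ insert i s then 1 else K) := by
              apply Finset.prod_le_prod
              · intro j _; linarith [hab' j]
              · intro j _
                rcases eq_or_ne j i with rfl | hj
                · simp only [Finset.mem_insert_self, if_pos]
                  rw [ha', Function.update_self]; linarith
                · rw [ha', Function.update_of_ne hj]
                  by_cases hjs : j ∈ s
                  · rw [if_pos (Finset.mem_insert_of_mem hjs)]
                    linarith [(hsab j hjs).1, (hsab j hjs).2]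
                  · rw [if_neg (by simp [hj, hjs])]
                    exact hlen j hjs
          _ = K ^ c := by
              rw [← Finset.prod_mul_prod_compl (insert i s)]
              rw [Finset.prod_congr rfl (fun j hj => if_pos hj), Finset.prod_const_one, one_mul]
              rw [Finset.prod_congr rfl (fun j hj => if_neg (Finset.mem_compl.mp hj)),
                Finset.prod_const]
              rw [Finset.compl_insert, Finset.card_erase_of_mem (Finset.mem_compl.mpr hi), hs,
                Nat.add_sub_cancel]
      calc |R| ≤ M * (volume (boxIoc a' b)).toReal := by
            rw [hR, ← Real.norm_eq_abs]
            apply norm_setIntegral_le_of_norm_le_const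
            · exact lt_of_le_of_lt (measure_mono (boxIoc_subset_Icc a' b))
                (IsCompact.measure_lt_top isCompact_Icc)
            · intro x _; rw [Real.norm_eq_abs]; exact hbound x
        _ ≤ M * K ^ c := by
            apply mul_le_mul_of_nonneg_left hvol hM
    -- combine
    rw [hpeel]
    have hmK : (m : ℝ) ≤ K := le_trans hmle (by linarith [hlen i hi])
    calc |(m:ℝ) * T + R| ≤ (m:ℝ) * |T| + |R| := by
          refine le_trans (abs_add_le _ _) ?_
          rw [abs_mul, abs_of_nonneg (Nat.cast_nonneg m : (0:ℝ) ≤ m)]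
      _ ≤ K * (M * c * K ^ (c-1)) + M * K ^ c := by
          apply add_le_add _ hRle
          apply mul_le_mul hmK hTle (abs_nonneg _) hK
      _ ≤ M * ((c:ℕ)+1 : ℕ) * K ^ ((c+1) - 1) := by
          have hcc : K * ((c:ℝ) * K ^ (c - 1)) = (c:ℝ) * K ^ c := by
            cases c with
            | zero => simp
            | succ c => rw [Nat.succ_sub_one, pow_succ]; ring
          apply le_of_eq
          have : ((c+1 : ℕ) : ℝ) = (c:ℝ) + 1 := by push_cast; ring
          rw [this, Nat.add_sub_cancel]
          calc K * (M * c * K ^ (c-1)) + M * K ^ c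
              = M * (K * ((c:ℝ) * K ^ (c-1))) + M * K ^ c := by ring
            _ = M * ((c:ℝ) * K ^ c) + M * K ^ c := by rw [hcc]
            _ = M * ((c:ℝ)+1) * K ^ c := by ring

lemma integral_Icc_eq_boxIoc {f : (Fin n → ℝ) → ℝ} (a b : Fin n → ℝ) :
    ∫ x in Set.Icc a b, f x = ∫ x in boxIoc a b, f x := by
  refine (setIntegral_congr_set ?_).symm
  rw [boxIoc, volume_pi]
  exact MeasureTheory.Measure.univ_pi_Ioc_ae_eq_Icc

lemma smul_Icc_pi (k : ℝ) (hk : 0 < k) (a b : Fin n → ℝ) :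
    k • Set.Icc a b = Set.Icc (k • a) (k • b) := by
  ext x
  rw [Set.mem_smul_set_iff_inv_smul_mem₀ hk.ne']
  simp only [Set.mem_Icc, Pi.le_def, Pi.smul_apply, smul_eq_mul]
  constructor
  · rintro ⟨h1, h2⟩
    constructor <;> intro i
    · have := h1 i; calc k * a i ≤ k * (k⁻¹ * x i) := by nlinarith
        _ = x i := by field_simp
    · have := h2 i; calc x i = k * (k⁻¹ * x i) := by field_simp
        _ ≤ k * b i := by nlinarith
  · rintro ⟨h1, h2⟩
    constructor <;> intro i
    · have := h1 i
      calc a i = k⁻¹ * (k * a i) := by field_simp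
        _ ≤ k⁻¹ * x i := by
            apply mul_le_mul_of_nonneg_left this (inv_nonneg.mpr hk.le)
    · have := h2 i
      calc k⁻¹ * x i ≤ k⁻¹ * (k * b i) := by
            apply mul_le_mul_of_nonneg_left this (inv_nonneg.mpr hk.le)
        _ = b i := by field_simp

lemma perK {f : (Fin n → ℝ) → ℝ} {M : ℝ} (hn : 1 ≤ n) (hf : Continuous f)
    (hper : ∀ (x : Fin n → ℝ) (v : Fin n → ℤ), f (x + fun i => (v i : ℝ)) = f x)
    (hmean : (∫ x in Set.Icc (0 : Fin n → ℝ) 1, f x) = 0)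
    (hbound : ∀ x, |f x| ≤ M)
    (β γ : Fin n → ℝ) (hβ : ∀ i, 0 ≤ β i) (hβγ : ∀ i, β i ≤ γ i) (hγ : ∀ i, γ i < 1)
    (k : ℕ) (hk : 1 ≤ k) :
    |∫ x in Set.Icc β γ, f (fun i => (k : ℝ) * x i)| ≤ M * n / k := by
  have hM : 0 ≤ M := le_trans (abs_nonneg _) (hbound 0)
  have hk0 : (0:ℝ) < k := by exact_mod_cast hk
  have heq : ∫ x in Set.Icc β γ, f (fun i => (k : ℝ) * x i)
      = ((k:ℝ) ^ n)⁻¹ • ∫ x in Set.Icc ((k:ℝ) • β) ((k:ℝ) • γ), f x := by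
    have h1 : ∀ x : Fin n → ℝ, (fun i => (k : ℝ) * x i) = (k:ℝ) • x := fun x => rfl
    simp_rw [h1]
    rw [Measure.setIntegral_comp_smul_of_pos volume f (Set.Icc β γ) hk0,
      Module.finrank_fin_fun, smul_Icc_pi _ hk0]
  rw [heq, smul_eq_mul, abs_mul, abs_of_nonneg (inv_nonneg.mpr (pow_nonneg hk0.le n))]
  have hbox : |∫ x in Set.Icc ((k:ℝ) • β) ((k:ℝ) • γ), f x| ≤ M * n * (k:ℝ) ^ (n-1) := by
    rw [integral_Icc_eq_boxIoc]
    apply boxInt_main hf hper hmean hbound hk0.le n ∅ (by simp)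
    · intro i hi; exact absurd hi (Finset.notMem_empty i)
    · intro i
      simp only [Pi.smul_apply, smul_eq_mul]
      exact mul_le_mul_of_nonneg_left (hβγ i) hk0.le
    · intro i _
      simp only [Pi.smul_apply, smul_eq_mul]
      have : γ i - β i ≤ 1 := by linarith [hγ i, hβ i]
      calc (k:ℝ) * γ i - (k:ℝ) * β i = (k:ℝ) * (γ i - β i) := by ring
        _ ≤ (k:ℝ) * 1 := mul_le_mul_of_nonneg_left this hk0.le
        _ = k := mul_one _
  calc ((k:ℝ) ^ n)⁻¹ * |∫ x in Set.Icc ((k:ℝ) • β) ((k:ℝ) • γ), f x|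
      ≤ ((k:ℝ) ^ n)⁻¹ * (M * n * (k:ℝ) ^ (n-1)) :=
        mul_le_mul_of_nonneg_left hbox (inv_nonneg.mpr (pow_nonneg hk0.le n))
    _ = M * n / k := by
        have hpow : (k:ℝ) ^ (n-1) * k = (k:ℝ) ^ n := by
          rw [← pow_succ, Nat.sub_add_cancel hn]
        field_simp
        rw [mul_assoc, hpow]; ring

lemma harm_sum_le_one_add_log : ∀ t : ℕ, 1 ≤ t →
    ∑ k ∈ Finset.Icc 1 t, (1:ℝ)/k ≤ 1 + Real.log t := by
  intro t ht
  induction t with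
  | zero => omega
  | succ t ih =>
    rcases Nat.eq_or_lt_of_le ht with h | h
    · simp [← h]
    · have ht1 : 1 ≤ t := by omega
      have ht0 : (0:ℝ) < t := by exact_mod_cast ht1
      have ht10 : (0:ℝ) < t + 1 := by linarith
      rw [Finset.sum_Icc_succ_top (by omega : 1 ≤ t + 1)]
      have hlog : (1:ℝ)/(t+1) ≤ Real.log (t+1) - Real.log t := by
        have hx : (0:ℝ) < (t:ℝ)/(t+1) := div_pos ht0 ht10
        have := Real.log_le_sub_one_of_pos hx
        rw [Real.log_div ht0.ne' ht10.ne'] at this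
        have harith : (t:ℝ)/(t+1) - 1 = -(1/(t+1)) := by field_simp; ring
        rw [harith] at this
        linarith
      have hcast : ((t+1 : ℕ) : ℝ) = (t:ℝ) + 1 := by push_cast; ring
      rw [hcast]
      have := ih ht1
      linarith

theorem stmt_9 {n : ℕ} (hn : 1 ≤ n) (f : (Fin n → ℝ) → ℝ) (M : ℝ)
    (hf : Continuous f)
    (hper : ∀ (x : Fin n → ℝ) (v : Fin n → ℤ), f (x + fun i => (v i : ℝ)) = f x)
    (hmean : (∫ x in Set.Icc (0 : Fin n → ℝ) 1, f x) = 0)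
    (hbound : ∀ x, |f x| ≤ M)
    (β γ : Fin n → ℝ) (hβ : ∀ i, 0 ≤ β i) (hβγ : ∀ i, β i ≤ γ i) (hγ : ∀ i, γ i < 1)
    (t : ℕ) (ht : 0 < t) :
    |∫ x in Set.Icc β γ, ∑ k ∈ Finset.Icc 1 t, f (fun i => (k : ℝ) * x i)| ≤
      M * n * (1 + Real.log t) := by
  have hM : 0 ≤ M := le_trans (abs_nonneg _) (hbound 0)
  have hint : ∀ k : ℕ, IntegrableOn (fun x : Fin n → ℝ => f (fun i => (k : ℝ) * x i))
      (Set.Icc β γ) := by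
    intro k
    have hc : Continuous (fun x : Fin n → ℝ => f (fun i => (k : ℝ) * x i)) :=
      hf.comp (continuous_pi fun i => continuous_const.mul (continuous_apply i))
    exact hc.continuousOn.integrableOn_compact isCompact_Icc
  rw [integral_finset_sum _ (fun k _ => hint k)]
  calc |∑ k ∈ Finset.Icc 1 t, ∫ x in Set.Icc β γ, f (fun i => (k : ℝ) * x i)|
      ≤ ∑ k ∈ Finset.Icc 1 t, |∫ x in Set.Icc β γ, f (fun i => (k : ℝ) * x i)| :=
        Finset.abs_sum_le_sum_abs _ _
    _ ≤ ∑ k ∈ Finset.Icc 1 t, M * n / k := by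
        apply Finset.sum_le_sum
        intro k hk
        exact perK hn hf hper hmean hbound β γ hβ hβγ hγ k (Finset.mem_Icc.mp hk).1
    _ = M * n * ∑ k ∈ Finset.Icc 1 t, (1:ℝ)/k := by
        rw [Finset.mul_sum]
        apply Finset.sum_congr rfl
        intro k _
        ring
    _ ≤ M * n * (1 + Real.log t) := by
        apply mul_le_mul_of_nonneg_left (harm_sum_le_one_add_log t ht)
        positivity
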